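/- (Theorem 2.2(ii), stable support) There exist K ∈ ℕ and index sets I*, A* with I* ∪ A* = {1,…,n} and I* ∩ A* = ∅ such that for every k > K: x_i^k ≠ 0 for all i ∈ I* and x_i^k = 0 for all i ∈ A*. -/

import Mathlib

open Filter
open scoped BigOperators InnerProductSpace

noncomputable section

/-- Real n-dimensional Euclidean space. -/
abbrev Vec (n : ℕ) := EuclideanSpace ℝ (Fin n)

/-- The smoothed objective `F(x, ε) = f(x) + λ ∑ᵢ (|xᵢ| + εᵢ)^p`. -/
def Fobj (n : ℕ) (p lam : ℝ) (f : Vec n → ℝ) (z : Vec n) (ε : Fin n → ℝ) : ℝ :=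
  f z + lam * ∑ i, (|z i| + ε i) ^ p

/-- The merit function `ψ(x, y, ε) = F(x, ε) + (β/2)‖x − y‖²`. -/
def psiObj (n : ℕ) (p lam β : ℝ) (f : Vec n → ℝ) (z y : Vec n) (ε : Fin n → ℝ) : ℝ :=
  Fobj n p lam f z ε + β / 2 * ‖z - y‖ ^ 2

/-- The weighted-ℓ₁ subproblem objective at iteration `k`:
`⟨∇f(yₖ), z⟩ + (β/2)‖z − yₖ‖² + λ ∑ᵢ wᵢᵏ |zᵢ|` with `wᵢᵏ = p(|xᵢᵏ| + εᵢᵏ)^{p−1}`. -/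
def subObj (n : ℕ) (p lam β : ℝ) (f : Vec n → ℝ) (xk yk : Vec n) (εk : Fin n → ℝ)
    (z : Vec n) : ℝ :=
  ⟪gradient f yk, z⟫_ℝ + β / 2 * ‖z - yk‖ ^ 2
    + lam * ∑ i, (p * (|xk i| + εk i) ^ (p - 1)) * |z i|

/-- All the hypotheses of the EIRL1 algorithm (Algorithm 1) together with
Assumption 2.1.  The convention `x⁻¹ = x⁰` is encoded through truncated
subtraction on ℕ (`x (k-1) = x 0` for `k = 0`). -/
structure EIRL1 (n : ℕ) (p lam β Lf μ αbar : ℝ) (f : Vec n → ℝ)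
    (x y : ℕ → Vec n) (ε : ℕ → Fin n → ℝ) (α : ℕ → ℝ) : Prop where
  hn : 1 ≤ n
  hp0 : 0 < p
  hp1 : p < 1
  hlam : 0 < lam
  hμ0 : 0 < μ
  hμ1 : μ < 1
  hLf : 0 ≤ Lf
  hβ : Lf < β
  hconv : ConvexOn ℝ Set.univ f
  hdiff : ContDiff ℝ 1 f
  hlip : ∀ a b, ‖gradient f a - gradient f b‖ ≤ Lf * ‖a - b‖
  hαbar0 : 0 ≤ αbar
  hαbar1 : αbar < 1
  hα0 : ∀ k, 0 ≤ α k
  hα1 : ∀ k, α k ≤ αbar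
  hε0 : ∀ i, 0 < ε 0 i
  hεpos : ∀ k i, 0 < ε (k + 1) i
  hεdec : ∀ k i, ε (k + 1) i ≤ μ * ε k i
  hy : ∀ k, y k = x k + α k • (x k - x (k - 1))
  hmin : ∀ k z, z ≠ x (k + 1) →
    subObj n p lam β f (x k) (y k) (ε k) (x (k + 1)) < subObj n p lam β f (x k) (y k) (ε k) z
  hlevel : Bornology.IsBounded {z : Vec n | Fobj n p lam f z 0 ≤ Fobj n p lam f (x 0) (ε 0)}

/- ======================= auxiliary lemmas ======================= -/

lemma coord_abs_le_norm {n : ℕ} (z : EuclideanSpace ℝ (Fin n)) (i : Fin n) : |z i| ≤ ‖z‖ := by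
  rw [EuclideanSpace.norm_eq, show |z i| = Real.sqrt ((z i)^2) from (Real.sqrt_sq_eq_abs _).symm]
  apply Real.sqrt_le_sqrt
  have := Finset.single_le_sum (f := fun j => ‖z j‖^2) (fun j _ => sq_nonneg _) (Finset.mem_univ i)
  simpa [Real.norm_eq_abs, sq_abs] using this

lemma rpow_tangent {p r s : ℝ} (hp0 : 0 < p) (hp1 : p < 1) (hr : 0 < r) (hs : 0 ≤ s) :
    s ^ p ≤ r ^ p + p * r ^ (p - 1) * (s - r) := by
  have h1 : (-1 : ℝ) ≤ s / r - 1 := by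
    have : 0 ≤ s / r := div_nonneg hs hr.le
    linarith
  have hb := rpow_one_add_le_one_add_mul_self h1 hp0.le hp1.le
  rw [show (1 : ℝ) + (s/r - 1) = s / r by ring] at hb
  have hrp : 0 < r ^ p := Real.rpow_pos_of_pos hr p
  have hdiv : (s / r) ^ p = s ^ p / r ^ p := Real.div_rpow hs hr.le p
  rw [hdiv] at hb
  have h2 : s ^ p ≤ r ^ p * (1 + p * (s / r - 1)) := by
    rw [div_le_iff₀ hrp] at hb
    linarith [hb]
  have h3 : r ^ (p - 1) = r ^ p / r := by
    rw [Real.rpow_sub hr, Real.rpow_one]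
  calc s ^ p ≤ r ^ p * (1 + p * (s / r - 1)) := h2
    _ = r ^ p + p * r ^ (p - 1) * (s - r) := by
        rw [h3]; field_simp

section CalcLemmas

variable {E : Type*} [NormedAddCommGroup E] [InnerProductSpace ℝ E] [CompleteSpace E]

lemma curve_hasDerivAt {f : E → ℝ} (hdiff : ContDiff ℝ 1 f) (a d : E) (t₀ : ℝ) :
    HasDerivAt (fun t : ℝ => f (a + t • d)) ⟪gradient f (a + t₀ • d), d⟫_ℝ t₀ := by
  have hdf : DifferentiableAt ℝ f (a + t₀ • d) :=
    (hdiff.differentiable one_ne_zero).differentiableAt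
  have hF := hdf.hasGradientAt.hasFDerivAt
  have hcurve : HasDerivAt (fun t : ℝ => a + t • d) d t₀ := by
    simpa using ((hasDerivAt_id t₀).smul_const d).const_add a
  have := hF.comp_hasDerivAt t₀ hcurve
  exact this

lemma descent_lemma {f : E → ℝ} {L : ℝ} (hdiff : ContDiff ℝ 1 f)
    (hlip : ∀ a b, ‖gradient f a - gradient f b‖ ≤ L * ‖a - b‖) (a b : E) :
    f b ≤ f a + ⟪gradient f a, b - a⟫_ℝ + L / 2 * ‖b - a‖ ^ 2 := by
  set d := b - a with hd
  set C := ⟪gradient f a, d⟫_ℝ with hC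
  set q : ℝ → ℝ := fun t => f (a + t • d) - t * C - t ^ 2 * (L / 2 * ‖d‖ ^ 2) with hqdef
  have hq : ∀ t : ℝ, HasDerivAt q
      (⟪gradient f (a + t • d), d⟫_ℝ - C - (2 * t) * (L / 2 * ‖d‖ ^ 2)) t := by
    intro t
    have h1 := curve_hasDerivAt hdiff a d t
    have h2 : HasDerivAt (fun t : ℝ => t * C) C t := hasDerivAt_mul_const C
    have h3 : HasDerivAt (fun t : ℝ => t ^ 2 * (L / 2 * ‖d‖ ^ 2))
        ((2 * t) * (L / 2 * ‖d‖ ^ 2)) t := by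
      simpa using (hasDerivAt_pow 2 t).mul_const (L / 2 * ‖d‖ ^ 2)
    exact (h1.sub h2).sub h3
  have hmono : AntitoneOn q (Set.Icc (0:ℝ) 1) := by
    apply antitoneOn_of_deriv_nonpos (convex_Icc 0 1)
    · exact (Differentiable.continuous fun t => (hq t).differentiableAt).continuousOn
    · exact fun t _ => ((hq t).differentiableAt).differentiableWithinAt
    · intro t ht
      rw [interior_Icc] at ht
      rw [(hq t).deriv]
      have hb : ⟪gradient f (a + t • d) - gradient f a, d⟫_ℝ
          ≤ L * t * ‖d‖ ^ 2 := by
        calc ⟪gradient f (a + t • d) - gradient f a, d⟫_ℝ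
            ≤ ‖gradient f (a + t • d) - gradient f a‖ * ‖d‖ := real_inner_le_norm _ _
          _ ≤ (L * ‖(a + t • d) - a‖) * ‖d‖ := by
              apply mul_le_mul_of_nonneg_right (hlip _ _) (norm_nonneg d)
          _ = L * t * ‖d‖ ^ 2 := by
              rw [add_sub_cancel_left, norm_smul, Real.norm_eq_abs, abs_of_pos ht.1]
              ring
      rw [inner_sub_left, ← hC] at hb
      nlinarith [hb]
  have h01 := hmono (Set.mem_Icc.2 ⟨le_refl 0, zero_le_one⟩)
    (Set.mem_Icc.2 ⟨zero_le_one, le_refl 1⟩) zero_le_one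
  have hq0 : q 0 = f a := by simp [hqdef]
  have hq1 : q 1 = f b - C - L / 2 * ‖d‖ ^ 2 := by
    have ha : a + (1:ℝ) • d = b := by rw [one_smul, hd]; abel
    show f (a + (1:ℝ) • d) - 1 * C - 1 ^ 2 * (L / 2 * ‖d‖ ^ 2) = f b - C - L / 2 * ‖d‖ ^ 2
    rw [ha]; ring
  rw [hq0, hq1] at h01
  linarith

lemma convex_grad_le {f : E → ℝ} (hconv : ConvexOn ℝ Set.univ f) (hdiff : ContDiff ℝ 1 f)
    (a b : E) : f a + ⟪gradient f a, b - a⟫_ℝ ≤ f b := by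
  set d := b - a with hd
  set g : ℝ → ℝ := fun t => f (a + t • d) with hg
  have hder : HasDerivAt g ⟪gradient f a, d⟫_ℝ 0 := by
    have := curve_hasDerivAt hdiff a d 0
    simpa using this
  have hslope := hasDerivAt_iff_tendsto_slope.1 hder
  have hle : ∀ t ∈ Set.Ioo (0:ℝ) 1, slope g 0 t ≤ f b - f a := by
    intro t ht
    have hcomb : g t ≤ (1 - t) * f a + t * f b := by
      have h := hconv.2 (Set.mem_univ a) (Set.mem_univ b) (by linarith [ht.2] : (0:ℝ) ≤ 1 - t)
        (le_of_lt ht.1) (by ring)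
      have heq : a + t • d = (1 - t) • a + t • b := by rw [hd]; module
      rw [hg]; simp only []
      rw [heq]
      simpa [smul_eq_mul] using h
    have hg0 : g 0 = f a := by simp [hg]
    rw [slope_def_field, sub_zero, hg0, div_le_iff₀ ht.1]
    nlinarith [hcomb]
  have htend : Tendsto (slope g 0) (nhdsWithin 0 (Set.Ioi 0)) (nhds ⟪gradient f a, d⟫_ℝ) :=
    hslope.mono_left (nhdsWithin_mono 0 (fun x hx => Set.mem_compl_singleton_iff.2 (ne_of_gt hx)))
  have : ⟪gradient f a, d⟫_ℝ ≤ f b - f a := by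
    apply le_of_tendsto htend
    filter_upwards [Ioo_mem_nhdsGT_of_mem (Set.mem_Ico.2 ⟨le_refl 0, zero_lt_one⟩)] with t ht
    exact hle t ht
  linarith

omit [CompleteSpace E] in
lemma norm_combo_sq (u v y : E) (t : ℝ) :
    ‖((1 - t) • u + t • v) - y‖ ^ 2
      = (1 - t) * ‖u - y‖ ^ 2 + t * ‖v - y‖ ^ 2 - t * (1 - t) * ‖u - v‖ ^ 2 := by
  have e : ∀ w : E, ‖w‖ ^ 2 = ⟪w, w⟫_ℝ := fun w => (real_inner_self_eq_norm_sq w).symm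
  simp only [e, inner_sub_left, inner_sub_right, inner_add_left, inner_add_right,
    real_inner_smul_left, real_inner_smul_right]
  simp only [real_inner_comm v u, real_inner_comm y u, real_inner_comm y v]
  ring

end CalcLemmas

lemma euclid_inner {n : ℕ} (x y : EuclideanSpace ℝ (Fin n)) : ⟪x, y⟫_ℝ = ∑ i, x i * y i := by
  simp [PiLp.inner_apply, RCLike.inner_apply, conj_trivial, mul_comm]

lemma euclid_norm_sq {n : ℕ} (z : EuclideanSpace ℝ (Fin n)) : ‖z‖ ^ 2 = ∑ i, (z i) ^ 2 := by
  rw [EuclideanSpace.norm_eq, Real.sq_sqrt (by positivity)]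
  simp [Real.norm_eq_abs, sq_abs]

lemma coord_opt {n : ℕ} {p lam β : ℝ} {f : Vec n → ℝ} {xk yk u : Vec n} {εk : Fin n → ℝ}
    (hlam : 0 ≤ lam) (hw : ∀ j, 0 ≤ p * (|xk j| + εk j) ^ (p - 1))
    (hopt : ∀ z, subObj n p lam β f xk yk εk u ≤ subObj n p lam β f xk yk εk z)
    (i : Fin n) (hne : u i ≠ 0) :
    lam * (p * (|xk i| + εk i) ^ (p - 1)) = |gradient f yk i + β * (u i - yk i)| := by
  set g : Vec n := gradient f yk with hg
  set w : Fin n → ℝ := fun j => p * (|xk j| + εk j) ^ (p - 1) with hwdef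
  set Z : ℝ → Vec n := fun t => u + (t - u i) • EuclideanSpace.single i (1:ℝ) with hZ
  have hZi : ∀ t, Z t i = t := by intro t; simp [hZ, EuclideanSpace.single_apply]
  have hZj : ∀ t, ∀ j, j ≠ i → Z t j = u j := by
    intro t j hj; simp [hZ, EuclideanSpace.single_apply, hj]
  have hZu : Z (u i) = u := by simp [hZ]
  set K1 : ℝ := ∑ j ∈ Finset.univ.erase i, g j * u j with hK1
  set K2 : ℝ := ∑ j ∈ Finset.univ.erase i, (u j - yk j) ^ 2 with hK2
  set K3 : ℝ := ∑ j ∈ Finset.univ.erase i, w j * |u j| with hK3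
  set φ : ℝ → ℝ := fun t => g i * t + β / 2 * (t - yk i) ^ 2 + lam * (w i) * |t| with hφ
  have hsum : ∀ t, subObj n p lam β f xk yk εk (Z t)
      = φ t + (K1 + β / 2 * K2 + lam * K3) := by
    intro t
    have e1 : ∑ j, g j * Z t j = g i * t + K1 := by
      rw [← Finset.add_sum_erase Finset.univ (fun j => g j * Z t j) (Finset.mem_univ i), hZi]
      congr 1
      apply Finset.sum_congr rfl
      intro j hj
      rw [hZj t j (Finset.ne_of_mem_erase hj)]
    have e2 : ∑ j, ((Z t - yk) j) ^ 2 = (t - yk i) ^ 2 + K2 := by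
      rw [← Finset.add_sum_erase Finset.univ (fun j => ((Z t - yk) j) ^ 2) (Finset.mem_univ i)]
      have h' : (Z t - yk) i = t - yk i := by simp [hZi t]
      rw [h']
      congr 1
      apply Finset.sum_congr rfl
      intro j hj
      have h'' : (Z t - yk) j = u j - yk j := by simp [hZj t j (Finset.ne_of_mem_erase hj)]
      rw [h'']
    have e3 : ∑ j, w j * |Z t j| = w i * |t| + K3 := by
      rw [← Finset.add_sum_erase Finset.univ (fun j => w j * |Z t j|) (Finset.mem_univ i), hZi]
      congr 1
      apply Finset.sum_congr rfl
      intro j hj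
      rw [hZj t j (Finset.ne_of_mem_erase hj)]
    show ⟪g, Z t⟫_ℝ + β / 2 * ‖Z t - yk‖ ^ 2 + lam * ∑ j, w j * |Z t j|
        = φ t + (K1 + β / 2 * K2 + lam * K3)
    rw [euclid_inner, euclid_norm_sq, e1, e2, e3, hφ]
    ring
  have hl : subObj n p lam β f xk yk εk u = φ (u i) + (K1 + β / 2 * K2 + lam * K3) := by
    have := hsum (u i)
    rwa [hZu] at this
  have hφmin : ∀ t, φ (u i) ≤ φ t := by
    intro t
    have h := hopt (Z t)
    rw [hsum t, hl] at h
    exact le_of_add_le_add_right h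
  have hlocal : IsLocalMin φ (u i) := Filter.Eventually.of_forall hφmin
  have hwn : 0 ≤ lam * w i := mul_nonneg hlam (hw i)
  rcases lt_or_gt_of_ne hne with hneg | hpos
  · set ψ : ℝ → ℝ := fun t => g i * t + β / 2 * (t - yk i) ^ 2 - lam * (w i) * t with hψ
    have heq : φ =ᶠ[nhds (u i)] ψ := by
      filter_upwards [Iio_mem_nhds hneg] with t ht
      rw [hφ, hψ]
      simp only []
      rw [abs_of_neg ht]
      ring
    have hlocal2 : IsLocalMin ψ (u i) := hlocal.congr heq
    have hd : HasDerivAt ψ (g i + β / 2 * (2 * (u i - yk i)) - lam * w i) (u i) := by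
      have d1 : HasDerivAt (fun t : ℝ => g i * t) (g i) (u i) := by
        simpa using (hasDerivAt_id (u i)).const_mul (g i)
      have d2 : HasDerivAt (fun t : ℝ => β / 2 * (t - yk i) ^ 2)
          (β / 2 * (2 * (u i - yk i))) (u i) := by
        have := (((hasDerivAt_id (u i)).sub_const (yk i)).pow 2).const_mul (β / 2)
        simpa using this
      have d3 : HasDerivAt (fun t : ℝ => lam * (w i) * t) (lam * w i) (u i) := by
        simpa using (hasDerivAt_id (u i)).const_mul (lam * w i)
      exact (d1.add d2).sub d3
    have hzero := hlocal2.hasDerivAt_eq_zero hd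
    have heval : g i + β * (u i - yk i) = lam * w i := by nlinarith [hzero]
    rw [heval, abs_of_nonneg hwn]
  · set ψ : ℝ → ℝ := fun t => g i * t + β / 2 * (t - yk i) ^ 2 + lam * (w i) * t with hψ
    have heq : φ =ᶠ[nhds (u i)] ψ := by
      filter_upwards [Ioi_mem_nhds hpos] with t ht
      rw [hφ, hψ]
      simp only []
      rw [abs_of_pos ht]
    have hlocal2 : IsLocalMin ψ (u i) := hlocal.congr heq
    have hd : HasDerivAt ψ (g i + β / 2 * (2 * (u i - yk i)) + lam * w i) (u i) := by
      have d1 : HasDerivAt (fun t : ℝ => g i * t) (g i) (u i) := by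
        simpa using (hasDerivAt_id (u i)).const_mul (g i)
      have d2 : HasDerivAt (fun t : ℝ => β / 2 * (t - yk i) ^ 2)
          (β / 2 * (2 * (u i - yk i))) (u i) := by
        have := (((hasDerivAt_id (u i)).sub_const (yk i)).pow 2).const_mul (β / 2)
        simpa using this
      have d3 : HasDerivAt (fun t : ℝ => lam * (w i) * t) (lam * w i) (u i) := by
        simpa using (hasDerivAt_id (u i)).const_mul (lam * w i)
      exact (d1.add d2).add d3
    have hzero := hlocal2.hasDerivAt_eq_zero hd
    have heval : g i + β * (u i - yk i) = -(lam * w i) := by nlinarith [hzero]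
    rw [heval, abs_neg, abs_of_nonneg hwn]

lemma subObj_combo {n : ℕ} {p lam β : ℝ} {f : Vec n → ℝ} {xk yk : Vec n} {εk : Fin n → ℝ}
    (hlam : 0 ≤ lam) (hw : ∀ j, 0 ≤ p * (|xk j| + εk j) ^ (p - 1))
    (u v : Vec n) {t : ℝ} (ht0 : 0 ≤ t) (ht1 : t ≤ 1) :
    subObj n p lam β f xk yk εk ((1 - t) • u + t • v)
      ≤ (1 - t) * subObj n p lam β f xk yk εk u + t * subObj n p lam β f xk yk εk v
        - β / 2 * (t * (1 - t)) * ‖u - v‖ ^ 2 := by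
  set g : Vec n := gradient f yk with hg
  set w : Fin n → ℝ := fun j => p * (|xk j| + εk j) ^ (p - 1) with hwdef
  have hi : ⟪g, (1 - t) • u + t • v⟫_ℝ = (1 - t) * ⟪g, u⟫_ℝ + t * ⟪g, v⟫_ℝ := by
    rw [inner_add_right, real_inner_smul_right, real_inner_smul_right]
  have hq := norm_combo_sq u v yk t
  have hs : ∑ j, w j * |((1 - t) • u + t • v) j|
      ≤ (1 - t) * ∑ j, w j * |u j| + t * ∑ j, w j * |v j| := by
    rw [Finset.mul_sum, Finset.mul_sum, ← Finset.sum_add_distrib]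
    apply Finset.sum_le_sum
    intro j _
    have hco : ((1 - t) • u + t • v) j = (1 - t) * u j + t * v j := by
      simp [smul_eq_mul]
    rw [hco]
    have habs : |(1 - t) * u j + t * v j| ≤ (1 - t) * |u j| + t * |v j| := by
      calc |(1 - t) * u j + t * v j| ≤ |(1 - t) * u j| + |t * v j| := abs_add_le _ _
        _ = (1 - t) * |u j| + t * |v j| := by
            rw [abs_mul, abs_mul, abs_of_nonneg (by linarith : (0:ℝ) ≤ 1 - t),
              abs_of_nonneg ht0]
    have hwj : 0 ≤ w j := hw j
    have := mul_le_mul_of_nonneg_left habs hwj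
    linarith
  show ⟪g, (1 - t) • u + t • v⟫_ℝ + β / 2 * ‖((1 - t) • u + t • v) - yk‖ ^ 2
      + lam * ∑ j, w j * |((1 - t) • u + t • v) j|
    ≤ (1 - t) * (⟪g, u⟫_ℝ + β / 2 * ‖u - yk‖ ^ 2 + lam * ∑ j, w j * |u j|)
      + t * (⟪g, v⟫_ℝ + β / 2 * ‖v - yk‖ ^ 2 + lam * ∑ j, w j * |v j|)
      - β / 2 * (t * (1 - t)) * ‖u - v‖ ^ 2
  rw [hi, hq]
  nlinarith [mul_le_mul_of_nonneg_left hs hlam]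

lemma subObj_strongmin {n : ℕ} {p lam β : ℝ} {f : Vec n → ℝ} {xk yk u : Vec n}
    {εk : Fin n → ℝ}
    (hlam : 0 ≤ lam) (hw : ∀ j, 0 ≤ p * (|xk j| + εk j) ^ (p - 1))
    (hopt : ∀ z, subObj n p lam β f xk yk εk u ≤ subObj n p lam β f xk yk εk z)
    {t : ℝ} (ht0 : 0 < t) (ht1 : t < 1) (v : Vec n) :
    subObj n p lam β f xk yk εk u + β / 2 * (1 - t) * ‖v - u‖ ^ 2
      ≤ subObj n p lam β f xk yk εk v := by
  have h1 := hopt ((1 - t) • u + t • v)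
  have h2 := subObj_combo (f := f) (yk := yk) (β := β) hlam hw u v ht0.le ht1.le
  have h3 : t * (subObj n p lam β f xk yk εk u + β / 2 * (1 - t) * ‖u - v‖ ^ 2)
      ≤ t * subObj n p lam β f xk yk εk v := by nlinarith [h1, h2]
  have h4 := le_of_mul_le_mul_left h3 ht0
  rw [norm_sub_rev v u]
  linarith

set_option maxHeartbeats 2000000 in
/-- Theorem 2.2(ii): stable support.  After some iteration `K`, the support of
the iterates is a fixed index set `I*` (with complement `A*`). -/
theorem stmt_7 (n : ℕ) (p lam β Lf μ αbar : ℝ) (f : Vec n → ℝ)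
    (x y : ℕ → Vec n) (ε : ℕ → Fin n → ℝ) (α : ℕ → ℝ)
    (H : EIRL1 n p lam β Lf μ αbar f x y ε α) :
    ∃ (K : ℕ) (Istar Astar : Finset (Fin n)),
      Istar ∪ Astar = Finset.univ ∧ Istar ∩ Astar = ∅ ∧
      ∀ k > K, (∀ i ∈ Istar, x k i ≠ 0) ∧ (∀ i ∈ Astar, x k i = 0) := by
  classical
  obtain ⟨hn, hp0, hp1, hlam, hμ0, hμ1, hLf, hβ, hconv, hdiff, hlip, hαbar0, hαbar1,
    hα0, hα1, hε0, hεpos, hεdec, hy, hmin, hlevel⟩ := H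
  have hβ0 : (0:ℝ) < β := lt_of_le_of_lt hLf hβ
  have hεk : ∀ k i, 0 < ε k i := by
    intro k i
    cases k with
    | zero => exact hε0 i
    | succ m => exact hεpos m i
  have hbase : ∀ k (j : Fin n), (0:ℝ) < |x k j| + ε k j :=
    fun k j => add_pos_of_nonneg_of_pos (abs_nonneg _) (hεk k j)
  have hw : ∀ k j, 0 ≤ p * (|x k j| + ε k j) ^ (p - 1) := fun k j =>
    mul_nonneg hp0.le (Real.rpow_nonneg (hbase k j).le _)
  have hopt : ∀ k z, subObj n p lam β f (x k) (y k) (ε k) (x (k + 1))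
      ≤ subObj n p lam β f (x k) (y k) (ε k) z := by
    intro k z
    by_cases hz : z = x (k + 1)
    · subst hz; exact le_refl _
    · exact (hmin k z hz).le
  obtain ⟨a, hadef⟩ : ∃ a : ℕ → ℝ, ∀ k, a k = ‖x k - x (k - 1)‖ := ⟨_, fun _ => rfl⟩
  have ha_nonneg : ∀ k, 0 ≤ a k := by intro k; rw [hadef]; exact norm_nonneg _
  have ha_succ : ∀ k, a (k + 1) = ‖x (k + 1) - x k‖ := by
    intro k; rw [hadef]; simp
  have ht00 : 0 < (1 - αbar ^ 2) / 2 := by nlinarith [hαbar0, hαbar1]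
  have ht01 : (1 - αbar ^ 2) / 2 < 1 := by nlinarith [sq_nonneg αbar]
  -- main decrease inequality
  have hdec : ∀ k, Fobj n p lam f (x (k + 1)) (ε (k + 1))
      + β / 4 * (1 + αbar ^ 2) * ‖x (k + 1) - x k‖ ^ 2
      ≤ Fobj n p lam f (x k) (ε k) + β / 2 * αbar ^ 2 * ‖x k - x (k - 1)‖ ^ 2 := by
    intro k
    have h_i := descent_lemma hdiff hlip (y k) (x (k + 1))
    have h_ii := convex_grad_le hconv hdiff (y k) (x k)
    have h_iii := subObj_strongmin (f := f) hlam.le (hw k) (hopt k) ht00 ht01 (x k)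
    simp only [subObj] at h_iii
    rw [inner_sub_right] at h_i h_ii
    have h_iv : ∑ i, (|x (k + 1) i| + ε (k + 1) i) ^ p
        ≤ ∑ i, (|x k i| + ε k i) ^ p
          + ((∑ i, (p * (|x k i| + ε k i) ^ (p - 1)) * |x (k + 1) i|)
            - ∑ i, (p * (|x k i| + ε k i) ^ (p - 1)) * |x k i|) := by
      have per : ∀ i ∈ Finset.univ, (|x (k + 1) i| + ε (k + 1) i) ^ p
          ≤ (|x k i| + ε k i) ^ p
            + ((p * (|x k i| + ε k i) ^ (p - 1)) * |x (k + 1) i|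
              - (p * (|x k i| + ε k i) ^ (p - 1)) * |x k i|) := by
        intro i _
        have hr : 0 < |x k i| + ε k i := hbase k i
        have hs : 0 ≤ |x (k + 1) i| + ε (k + 1) i := (hbase (k + 1) i).le
        have h1 := rpow_tangent hp0 hp1 hr hs
        have h2 : ε (k + 1) i ≤ ε k i :=
          le_trans (hεdec k i) (by nlinarith [hεk k i] : μ * ε k i ≤ ε k i)
        have h3 := hw k i
        have h4 : 0 ≤ p * (|x k i| + ε k i) ^ (p - 1) * (ε k i - ε (k + 1) i) :=
          mul_nonneg h3 (by linarith)
        nlinarith [h1, h4]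
      have hss := Finset.sum_le_sum per
      rw [Finset.sum_add_distrib, Finset.sum_sub_distrib] at hss
      linarith [hss]
    have hvy : ‖x k - y k‖ ^ 2 ≤ αbar ^ 2 * ‖x k - x (k - 1)‖ ^ 2 := by
      have hrep : x k - y k = -(α k • (x k - x (k - 1))) := by
        rw [hy k]; module
      have h5 : ‖x k - y k‖ = α k * ‖x k - x (k - 1)‖ := by
        rw [hrep, norm_neg, norm_smul, Real.norm_eq_abs, abs_of_nonneg (hα0 k)]
      rw [h5, mul_pow]
      apply mul_le_mul_of_nonneg_right _ (sq_nonneg _)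
      exact pow_le_pow_left₀ (hα0 k) (hα1 k) 2
    have hvy2 : β / 2 * ‖x k - y k‖ ^ 2 ≤ β / 2 * (αbar ^ 2 * ‖x k - x (k - 1)‖ ^ 2) :=
      mul_le_mul_of_nonneg_left hvy (by linarith)
    rw [norm_sub_rev (x k) (x (k + 1))] at h_iii
    have hgap : Lf / 2 * ‖x (k + 1) - y k‖ ^ 2 ≤ β / 2 * ‖x (k + 1) - y k‖ ^ 2 :=
      mul_le_mul_of_nonneg_right (by linarith) (sq_nonneg _)
    have h_iv' := mul_le_mul_of_nonneg_left h_iv hlam.le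
    simp only [Fobj]
    linarith [h_i, h_ii, h_iii, h_iv', hvy2, hgap]
  -- Lyapunov function
  obtain ⟨Hf, hHdef⟩ : ∃ g : ℕ → ℝ, ∀ k, g k = Fobj n p lam f (x k) (ε k)
      + β / 4 * (1 + αbar ^ 2) * a k ^ 2 := ⟨_, fun _ => rfl⟩
  have hH' : ∀ k, Hf (k + 1) + β / 4 * (1 - αbar ^ 2) * a k ^ 2 ≤ Hf k := by
    intro k
    have hh := hdec k
    rw [← ha_succ k, ← hadef k] at hh
    rw [hHdef, hHdef]
    linarith [hh]
  have hdk_nonneg : ∀ k, 0 ≤ β / 4 * (1 - αbar ^ 2) * a k ^ 2 := by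
    intro k
    apply mul_nonneg (mul_nonneg (by linarith) (by nlinarith [hαbar0, hαbar1])) (sq_nonneg _)
  have hHmono : ∀ k, Hf (k + 1) ≤ Hf k := by
    intro k
    linarith [hH' k, hdk_nonneg k]
  have hHle0 : ∀ k, Hf k ≤ Hf 0 := by
    intro k
    induction k with
    | zero => exact le_refl _
    | succ m ih => exact le_trans (hHmono m) ih
  have hH0 : Hf 0 = Fobj n p lam f (x 0) (ε 0) := by
    have ha0 : a 0 = 0 := by rw [hadef]; simp
    rw [hHdef, ha0]
    ring
  have hF0le : ∀ k, Fobj n p lam f (x k) 0 ≤ Fobj n p lam f (x k) (ε k) := by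
    intro k
    simp only [Fobj, Pi.zero_apply, add_zero]
    have hterm : ∀ i ∈ Finset.univ, |x k i| ^ p ≤ (|x k i| + ε k i) ^ p := fun i _ =>
      Real.rpow_le_rpow (abs_nonneg _) (by linarith [hεk k i]) hp0.le
    have hss := Finset.sum_le_sum hterm
    have := mul_le_mul_of_nonneg_left hss hlam.le
    linarith
  have hcoef_nonneg : (0:ℝ) ≤ β / 4 * (1 + αbar ^ 2) :=
    mul_nonneg (by linarith) (by nlinarith [sq_nonneg αbar])
  have hFleH : ∀ k, Fobj n p lam f (x k) (ε k) ≤ Hf k := by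
    intro k
    rw [hHdef]
    nlinarith [mul_nonneg hcoef_nonneg (sq_nonneg (a k))]
  obtain ⟨R0, hR0⟩ := (isBounded_iff_forall_norm_le).1 hlevel
  set R : ℝ := max R0 0 with hRdef
  have hR : ∀ k, ‖x k‖ ≤ R := by
    intro k
    have hx : Fobj n p lam f (x k) 0 ≤ Fobj n p lam f (x 0) (ε 0) := by
      calc Fobj n p lam f (x k) 0 ≤ Fobj n p lam f (x k) (ε k) := hF0le k
        _ ≤ Hf k := hFleH k
        _ ≤ Hf 0 := hHle0 k
        _ = Fobj n p lam f (x 0) (ε 0) := hH0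
    exact le_trans (hR0 _ hx) (le_max_left _ _)
  have hRpos : (0:ℝ) ≤ R := le_max_right _ _
  obtain ⟨zmin, hzmin, hminOn⟩ := (isCompact_closedBall (0 : Vec n) R).exists_isMinOn
    ⟨0, Metric.mem_closedBall_self hRpos⟩ ((hdiff.continuous).continuousOn)
  have hmlow := isMinOn_iff.mp hminOn
  set m : ℝ := f zmin with hmdef
  have hsum_nonneg : ∀ k, 0 ≤ lam * ∑ i, (|x k i| + ε k i) ^ p := by
    intro k
    apply mul_nonneg hlam.le
    exact Finset.sum_nonneg fun i _ => Real.rpow_nonneg (hbase k i).le _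
  have hlow : ∀ k, m ≤ Hf k := by
    intro k
    have hx : x k ∈ Metric.closedBall (0 : Vec n) R := by
      rw [Metric.mem_closedBall, dist_zero_right]; exact hR k
    have h1 := hmlow (x k) hx
    have h2 := hFleH k
    have h3 := hsum_nonneg k
    simp only [Fobj] at h2
    linarith
  have hd0 : (0:ℝ) < β / 4 * (1 - αbar ^ 2) := by nlinarith [hαbar0, hαbar1]
  have htel : ∀ N, ∑ k ∈ Finset.range N, β / 4 * (1 - αbar ^ 2) * a k ^ 2 ≤ Hf 0 - Hf N := by
    intro N
    induction N with
    | zero => simp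
    | succ M ih =>
      rw [Finset.sum_range_succ]
      have := hH' M
      linarith
  have hbound : ∀ N, ∑ k ∈ Finset.range N, a k ^ 2 ≤ (Hf 0 - m) / (β / 4 * (1 - αbar ^ 2)) := by
    intro N
    rw [le_div_iff₀ hd0]
    have h1 := htel N
    have h2 := hlow N
    have h3 : ∑ k ∈ Finset.range N, β / 4 * (1 - αbar ^ 2) * a k ^ 2
        = (∑ k ∈ Finset.range N, a k ^ 2) * (β / 4 * (1 - αbar ^ 2)) := by
      rw [Finset.sum_mul]
      exact Finset.sum_congr rfl fun i _ => by ring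
    rw [h3] at h1
    linarith
  have hsummable : Summable (fun k => a k ^ 2) :=
    summable_of_sum_range_le (fun k => sq_nonneg _) hbound
  have htendsq : Tendsto (fun k => a k ^ 2) atTop (nhds 0) := hsummable.tendsto_atTop_zero
  have htenda : Tendsto a atTop (nhds 0) := by
    have h1 : Tendsto (fun k => Real.sqrt (a k ^ 2)) atTop (nhds (Real.sqrt 0)) :=
      (Real.continuous_sqrt.tendsto 0).comp htendsq
    rw [Real.sqrt_zero] at h1
    have h2 : (fun k => Real.sqrt (a k ^ 2)) = a := by
      funext k
      exact Real.sqrt_sq (ha_nonneg k)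
    rwa [h2] at h1
  have hyb : ∀ k, ‖y k‖ ≤ 3 * R := by
    intro k
    rw [hy k]
    calc ‖x k + α k • (x k - x (k - 1))‖ ≤ ‖x k‖ + ‖α k • (x k - x (k - 1))‖ := norm_add_le _ _
      _ = ‖x k‖ + α k * ‖x k - x (k - 1)‖ := by
          rw [norm_smul, Real.norm_eq_abs, abs_of_nonneg (hα0 k)]
      _ ≤ 3 * R := by
          have h1 := norm_sub_le (x k) (x (k - 1))
          have h2 : α k ≤ 1 := le_trans (hα1 k) hαbar1.le
          have h3 : α k * ‖x k - x (k - 1)‖ ≤ 1 * (‖x k‖ + ‖x (k - 1)‖) :=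
            mul_le_mul h2 h1 (norm_nonneg _) zero_le_one
          have h4 := hR k
          have h5 := hR (k - 1)
          linarith
  have hgb : ∀ k, ‖gradient f (y k)‖ ≤ ‖gradient f 0‖ + Lf * (3 * R) := by
    intro k
    have h1 := hlip (y k) 0
    rw [sub_zero] at h1
    have h2 : ‖gradient f (y k)‖
        ≤ ‖gradient f (y k) - gradient f 0‖ + ‖gradient f 0‖ := by
      calc ‖gradient f (y k)‖ = ‖(gradient f (y k) - gradient f 0) + gradient f 0‖ := by
            rw [sub_add_cancel]
        _ ≤ ‖gradient f (y k) - gradient f 0‖ + ‖gradient f 0‖ := norm_add_le _ _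
    have h3 := mul_le_mul_of_nonneg_left (hyb k) hLf
    linarith
  set G : ℝ := ‖gradient f 0‖ + Lf * (3 * R) with hGdef
  have hG0 : 0 ≤ G := by
    have : 0 ≤ Lf * (3 * R) := mul_nonneg hLf (by linarith)
    have := norm_nonneg (gradient f 0)
    rw [hGdef]
    linarith
  set C : ℝ := G + β * (4 * R) + 1 with hCdef
  have hC0 : 0 < C := by
    have : 0 ≤ β * (4 * R) := mul_nonneg hβ0.le (by linarith)
    rw [hCdef]
    linarith
  have hdual : ∀ k i, x (k + 1) i ≠ 0 → lam * p * (|x k i| + ε k i) ^ (p - 1) ≤ C := by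
    intro k i hne
    have h1 := coord_opt (f := f) hlam.le (hw k) (hopt k) i hne
    have h2 : |gradient f (y k) i + β * (x (k + 1) i - y k i)|
        ≤ ‖gradient f (y k)‖ + β * (‖x (k + 1)‖ + ‖y k‖) := by
      have t1 : |gradient f (y k) i + β * (x (k + 1) i - y k i)|
          ≤ |gradient f (y k) i| + β * |x (k + 1) i - y k i| := by
        have := abs_add_le (gradient f (y k) i) (β * (x (k + 1) i - y k i))
        rw [abs_mul, abs_of_nonneg hβ0.le] at this
        exact this
      have t2 : |x (k + 1) i - y k i| ≤ |x (k + 1) i| + |y k i| := by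
        rw [sub_eq_add_neg]
        calc |x (k + 1) i + -(y k i)| ≤ |x (k + 1) i| + |-(y k i)| := abs_add_le _ _
          _ = |x (k + 1) i| + |y k i| := by rw [abs_neg]
      have t3 := coord_abs_le_norm (gradient f (y k)) i
      have t4 := coord_abs_le_norm (x (k + 1)) i
      have t5 := coord_abs_le_norm (y k) i
      have t6 : β * |x (k + 1) i - y k i| ≤ β * (‖x (k + 1)‖ + ‖y k‖) := by
        apply mul_le_mul_of_nonneg_left _ hβ0.le
        linarith
      linarith
    have h8 : ‖gradient f (y k)‖ + β * (‖x (k + 1)‖ + ‖y k‖) ≤ G + β * (4 * R) := by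
      have h9 := hgb k
      have h10 := mul_le_mul_of_nonneg_left (add_le_add (hR (k + 1)) (hyb k)) hβ0.le
      rw [hGdef]
      linarith
    have h11 : lam * (p * (|x k i| + ε k i) ^ (p - 1)) ≤ C := by
      rw [h1, hCdef]
      linarith
    linarith [h11]
  set c : ℝ := (C / (lam * p)) ^ (p - 1)⁻¹ with hcdef
  have hlp : (0:ℝ) < lam * p := mul_pos hlam hp0
  have hM0 : 0 < C / (lam * p) := div_pos hC0 hlp
  have hc0 : 0 < c := Real.rpow_pos_of_pos hM0 _
  have hlb : ∀ k i, x (k + 1) i ≠ 0 → c ≤ |x k i| + ε k i := by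
    intro k i hne
    have hr : 0 < |x k i| + ε k i := hbase k i
    have h1 := hdual k i hne
    have h2 : (|x k i| + ε k i) ^ (p - 1) ≤ C / (lam * p) := by
      rw [le_div_iff₀ hlp]
      nlinarith [h1]
    have hz : (p - 1)⁻¹ ≤ 0 := inv_nonpos.2 (by linarith)
    have h3 := Real.rpow_le_rpow_of_nonpos (Real.rpow_pos_of_pos hr (p - 1)) h2 hz
    rw [Real.rpow_rpow_inv hr.le (by linarith : p - 1 ≠ 0)] at h3
    rw [hcdef]
    exact h3
  -- eventual bounds
  have hεle : ∀ k i, ε k i ≤ μ ^ k * ε 0 i := by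
    intro k i
    induction k with
    | zero => simp
    | succ q ih =>
      calc ε (q + 1) i ≤ μ * ε q i := hεdec q i
        _ ≤ μ * (μ ^ q * ε 0 i) := mul_le_mul_of_nonneg_left ih hμ0.le
        _ = μ ^ (q + 1) * ε 0 i := by ring
  have hεev : ∀ᶠ k in atTop, ∀ i, ε k i < c / 2 := by
    rw [eventually_all]
    intro i
    have htend : Tendsto (fun k => μ ^ k * ε 0 i) atTop (nhds 0) := by
      have hh := tendsto_pow_atTop_nhds_zero_of_lt_one hμ0.le hμ1
      simpa using hh.mul_const (ε 0 i)
    have hev := htend.eventually_lt_const (by linarith : (0:ℝ) < c / 2)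
    filter_upwards [hev] with k hk
    exact lt_of_le_of_lt (hεle k i) hk
  have haev : ∀ᶠ k in atTop, a k < c / 4 :=
    htenda.eventually_lt_const (by linarith : (0:ℝ) < c / 4)
  obtain ⟨K₀, hK₀⟩ := eventually_atTop.1 (haev.and hεev)
  have hstep : ∀ k i, |x k i - x (k + 1) i| ≤ a (k + 1) := by
    intro k i
    rw [ha_succ]
    have hco := coord_abs_le_norm (x (k + 1) - x k) i
    rw [show (x (k + 1) - x k) i = x (k + 1) i - x k i from by simp] at hco
    rw [abs_sub_comm]
    exact hco
  have claim1 : ∀ k, K₀ + 1 ≤ k → ∀ i, x k i ≠ 0 → c / 4 < |x k i| := by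
    intro k hk i hne
    obtain ⟨j, rfl⟩ : ∃ j, k = j + 1 := ⟨k - 1, by omega⟩
    have hj : K₀ ≤ j := by omega
    have h1 := hlb j i hne
    have h2 := (hK₀ j hj).2 i
    have h3 := (hK₀ (j + 1) (by omega)).1
    have h4 := hstep j i
    have h5 := abs_sub_abs_le_abs_sub (x j i) (x (j + 1) i)
    linarith
  have claim2 : ∀ k, K₀ + 1 ≤ k → ∀ i, (x k i ≠ 0 ↔ x (k + 1) i ≠ 0) := by
    intro k hk i
    constructor
    · intro hne
      have h1 := claim1 k hk i hne
      have h3 := (hK₀ (k + 1) (by omega)).1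
      have h4 := hstep k i
      have h5 := abs_sub_abs_le_abs_sub (x k i) (x (k + 1) i)
      have h6 : 0 < |x (k + 1) i| := by linarith
      exact abs_pos.mp h6
    · intro hne
      have h1 := claim1 (k + 1) (by omega) i hne
      by_contra h0
      have h0' : x k i = 0 := h0
      have h4 := hstep k i
      rw [h0', zero_sub, abs_neg] at h4
      have h3 := (hK₀ (k + 1) (by omega)).1
      linarith
  have hstab : ∀ k, K₀ + 2 ≤ k → ∀ i, (x k i ≠ 0 ↔ x (K₀ + 2) i ≠ 0) := by
    intro k
    induction k with
    | zero => intro hk; omega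
    | succ q ih =>
      intro hk i
      rcases Nat.lt_or_ge q (K₀ + 2) with hq | hq
      · have he : q + 1 = K₀ + 2 := by omega
        rw [he]
      · exact ((claim2 q (by omega) i).symm).trans (ih hq i)
  refine ⟨K₀ + 1, Finset.univ.filter (fun i => x (K₀ + 2) i ≠ 0),
    Finset.univ.filter (fun i => ¬(x (K₀ + 2) i ≠ 0)), ?_, ?_, ?_⟩
  · exact Finset.filter_union_filter_not_eq _ _
  · ext i
    simp only [Finset.mem_inter, Finset.mem_filter, Finset.mem_univ, true_and,
      Finset.notMem_empty, iff_false]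
    tauto
  · intro k hk
    constructor
    · intro i hi
      rw [Finset.mem_filter] at hi
      exact (hstab k (by omega) i).2 hi.2
    · intro i hi
      rw [Finset.mem_filter] at hi
      by_contra hne
      exact hi.2 ((hstab k (by omega) i).1 hne)
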